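/- arXiv:1311.0331 — 2 statements merged into one kernel-verified Lean document; each statement's English description precedes it below -/
import Mathlib

section
/- Characterization of Wadge hardness for Hausdorff difference classes in the Scott domain: for every H ⊆ 𝒫(ℕ) and every ordinal α with 1 ≤ α < ω₁, H is Wadge hard for D_α(𝒫(ℕ)) if and only if there exists a decreasing H-alternating chain in 𝒫(ℕ) of length α+1. -/
open Topology

/-- The Scott topology on 𝒫(ℕ), generated by the basic open sets
`B_A = {X : A ⊆ X}` for finite `A ⊆ ℕ`. -/
def ScottPN : TopologicalSpace (Set ℕ) :=
  TopologicalSpace.generateFrom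
    {O : Set (Set ℕ) | ∃ A : Set ℕ, A.Finite ∧ O = {X : Set ℕ | A ⊆ X}}

/-- An ordinal is even if its canonical decomposition `λ + n`
(`λ` zero or a limit, `n < ω`) has `n` even. -/
def OrdEven (o : Ordinal) : Prop :=
  ∃ (l : Ordinal) (n : ℕ), (l = 0 ∨ Order.IsSuccLimit l) ∧ o = l + 2 * n

/-- Two ordinals have the same parity. -/
def SameParity (a b : Ordinal) : Prop := OrdEven a ↔ OrdEven b

/-- The Hausdorff difference operation `D_α`. -/
def DOp {E : Type*} (α : Ordinal) (U : Ordinal → Set E) : Set E :=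
  ⋃ β ∈ {β : Ordinal | β < α ∧ ¬ SameParity β α}, (U β \ ⋃ γ ∈ Set.Iio β, U γ)

/-- Membership in the Hausdorff difference class `D_α(E)`. -/
def MemD {E : Type*} (t : TopologicalSpace E) (α : Ordinal) (A : Set E) : Prop :=
  ∃ U : Ordinal → Set E, (∀ β < α, IsOpen[t] (U β)) ∧ A = DOp α U
/-- A decreasing `A`-alternating chain of length `α+1` in `𝒫(ℕ)`. -/
def AltChain (A : Set (Set ℕ)) (α : Ordinal) (X : Ordinal → Set ℕ) : Prop :=
  (∀ β δ : Ordinal, β < δ → δ ≤ α → X δ ⊂ X β) ∧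
  (∀ β ≤ α, X β ∈ A ↔ ¬ SameParity β α)

/-- An `A`-special `(α+1)`-chain in `𝒫(ℕ)`. -/
def SpecialChain (A : Set (Set ℕ)) (α : Ordinal) (X : Ordinal → Set ℕ) : Prop :=
  AltChain A α X ∧
  (∀ β < α, ∀ Y : Set ℕ, Y ⊆ X β → X (β + 1) ⊂ Y → (Y ∈ A ↔ ¬ SameParity β α)) ∧
  (∀ Y : Set ℕ, Y ⊆ X α → Y ∉ A)
/-- Wadge reducibility between families of subsets of ℕ (Scott topology). -/
def WadgeLe (A B : Set (Set ℕ)) : Prop :=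
  ∃ f : Set ℕ → Set ℕ, Continuous[ScottPN, ScottPN] f ∧ A = f ⁻¹' B

/-! ### Auxiliary lemmas: ordinal parity -/

lemma ordEven_total (o : Ordinal) : OrdEven o ∨ OrdEven (o + 1) := by
  induction o using Ordinal.limitRecOn with
  | zero => exact Or.inl ⟨0, 0, Or.inl rfl, by simp⟩
  | add_one o ih =>
    rcases ih with h | h
    · obtain ⟨l, n, hl, rfl⟩ := h
      refine Or.inr ⟨l, n + 1, hl, ?_⟩
      push_cast
      rw [mul_add, mul_one, add_assoc, add_assoc]
      norm_num
    · exact Or.inl h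
  | limit o ho _ => exact Or.inl ⟨o, 0, Or.inr ho, by simp⟩

lemma decomp_unique_aux {l l' : Ordinal} {m m' : ℕ}
    (hl' : l' = 0 ∨ Order.IsSuccLimit l') (hle : l ≤ l') (h : l + (m : Ordinal) = l' + (m' : Ordinal)) :
    l = l' := by
  have hk : l + (l' - l) = l' := Ordinal.add_sub_cancel_of_le hle
  set k := l' - l with hkdef
  have hkm : k + (m' : Ordinal) = (m : Ordinal) := by
    rw [← add_left_cancel_iff (a := l), ← add_assoc, hk, h]
  have hklt : k < Ordinal.omega0 := by
    refine lt_of_le_of_lt ?_ (Ordinal.nat_lt_omega0 m)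
    calc k ≤ k + (m' : Ordinal) := le_self_add
    _ = _ := hkm
  obtain ⟨j, hj⟩ := Ordinal.lt_omega0.mp hklt
  rcases Nat.eq_zero_or_pos j with hj0 | hj0
  · rw [← hk, hj, hj0]; simp
  · exfalso
    have hsucc : l' = (l + (j - 1 : ℕ)) + 1 := by
      rw [← hk, hj, add_assoc]
      congr 1
      have : ((j - 1 : ℕ) : Ordinal) + 1 = ((j - 1 + 1 : ℕ) : Ordinal) := by push_cast; ring
      rw [this, Nat.sub_add_cancel hj0]
    rcases hl' with h0 | hlim
    · rw [h0] at hsucc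
      exact (Ordinal.succ_ne_zero _) (by rw [← Ordinal.add_one_eq_succ, ← hsucc])
    · have hlt : (l + (j - 1 : ℕ)) + 1 < l' := by
        rw [Ordinal.add_one_eq_succ]
        exact hlim.succ_lt (by rw [hsucc]; exact lt_add_one _)
      rw [hsucc] at hlt
      exact lt_irrefl _ hlt

lemma decomp_unique {l l' : Ordinal} {m m' : ℕ} (hl : l = 0 ∨ Order.IsSuccLimit l)
    (hl' : l' = 0 ∨ Order.IsSuccLimit l') (h : l + (m : Ordinal) = l' + (m' : Ordinal)) :
    l = l' ∧ m = m' := by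
  have hll : l = l' := by
    rcases le_total l l' with hle | hle
    · exact decomp_unique_aux hl' hle h
    · exact (decomp_unique_aux hl hle h.symm).symm
  subst hll
  refine ⟨rfl, ?_⟩
  have := (add_left_cancel_iff (a := l)).mp h
  exact_mod_cast this

lemma ordEven_not_both (o : Ordinal) : ¬ (OrdEven o ∧ OrdEven (o + 1)) := by
  rintro ⟨⟨l, n, hl, rfl⟩, ⟨l', n', hl', h⟩⟩
  have h2 : l + ((2 * n + 1 : ℕ) : Ordinal) = l' + ((2 * n' : ℕ) : Ordinal) := by
    push_cast
    rw [← add_assoc, ← h]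
  obtain ⟨-, hnn⟩ := decomp_unique hl hl' h2
  omega

lemma ordEven_succ_iff (o : Ordinal) : OrdEven (o + 1) ↔ ¬ OrdEven o := by
  have h1 := ordEven_total o
  have h2 := ordEven_not_both o
  tauto

lemma sameParity_refl (a : Ordinal) : SameParity a a := Iff.rfl

lemma sameParity_succ_left (β γ : Ordinal) : SameParity (β + 1) γ ↔ ¬ SameParity β γ := by
  unfold SameParity
  rw [ordEven_succ_iff]
  tauto

/-! ### Auxiliary lemmas: Scott topology -/

lemma scott_upward {O : Set (Set ℕ)} (h : IsOpen[ScottPN] O) :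
    ∀ ⦃Y Z : Set ℕ⦄, Y ∈ O → Y ⊆ Z → Z ∈ O := by
  induction h with
  | basic s hs =>
    obtain ⟨A, -, rfl⟩ := hs
    exact fun Y Z hY hYZ => hY.trans hYZ
  | univ => exact fun Y Z _ _ => trivial
  | inter s t _ _ ihs iht => exact fun Y Z hY hYZ => ⟨ihs hY.1 hYZ, iht hY.2 hYZ⟩
  | sUnion S _ ih =>
    intro Y Z hY hYZ
    obtain ⟨s, hs, hYs⟩ := hY
    exact ⟨s, hs, ih s hs hYs hYZ⟩

lemma scott_singleton_open (n : ℕ) : IsOpen[ScottPN] {W : Set ℕ | n ∈ W} := by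
  apply TopologicalSpace.GenerateOpen.basic
  exact ⟨{n}, Set.finite_singleton n, by ext W; simp⟩

lemma cont_mono {f : Set ℕ → Set ℕ} (hf : Continuous[ScottPN, ScottPN] f) :
    ∀ ⦃Y Z : Set ℕ⦄, Y ⊆ Z → f Y ⊆ f Z := by
  intro Y Z hYZ n hn
  have hop : IsOpen[ScottPN] (f ⁻¹' {W : Set ℕ | n ∈ W}) :=
    @Continuous.isOpen_preimage _ _ ScottPN ScottPN f hf _ (scott_singleton_open n)
  exact scott_upward hop hn hYZ

/-! ### A strictly decreasing chain of subsets of ℕ of countable length -/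

lemma exists_chain (α : Ordinal) (h2 : α.card ≤ Cardinal.aleph0) :
    ∃ X : Ordinal → Set ℕ, ∀ β δ : Ordinal, β < δ → δ ≤ α → X δ ⊂ X β := by
  classical
  have hc : Countable (Set.Iic α) := by
    rw [← Order.Iio_succ α]
    rw [← Cardinal.mk_le_aleph0_iff, Ordinal.mk_Iio_ordinal, Ordinal.card_succ,
      Cardinal.lift_le_aleph0]
    calc α.card + 1 ≤ Cardinal.aleph0 + 1 := by gcongr
      _ = Cardinal.aleph0 := by simp
  obtain ⟨g₀, hg₀⟩ := exists_injective_nat (Set.Iic α)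
  set g : Ordinal → ℕ := fun γ => if h : γ ≤ α then g₀ ⟨γ, h⟩ else 0 with hg
  refine ⟨fun β => {n | ∃ γ, β ≤ γ ∧ γ ≤ α ∧ g γ = n}, ?_⟩
  intro β δ hβδ hδα
  have hβα : β ≤ α := hβδ.le.trans hδα
  rw [Set.ssubset_def]
  constructor
  · rintro n ⟨γ, hg1, hg2, hg3⟩
    exact ⟨γ, (hβδ.le.trans hg1), hg2, hg3⟩
  · intro hsub
    have hmem : g β ∈ {n | ∃ γ, δ ≤ γ ∧ γ ≤ α ∧ g γ = n} := hsub ⟨β, le_refl β, hβα, rfl⟩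
    obtain ⟨γ, hg1, hg2, hg3⟩ := hmem
    rw [hg] at hg3
    simp only [dif_pos hg2, dif_pos hβα] at hg3
    have hγβ : γ = β := Subtype.ext_iff.mp (hg₀ hg3)
    subst hγβ
    exact absurd (hβδ.trans_le hg1) (lt_irrefl γ)

/-! ### Characterization of membership in `DOp` -/

lemma mem_DOp_iff {α : Ordinal} {U : Ordinal → Set (Set ℕ)} {Z : Set ℕ} :
    Z ∈ DOp α U ↔ ∃ β, β < α ∧ ¬ SameParity β α ∧ Z ∈ U β ∧ ∀ γ < β, Z ∉ U γ := by
  constructor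
  · intro h
    obtain ⟨β, hβ, hZU, hZnot⟩ := Set.mem_iUnion₂.mp h
    exact ⟨β, hβ.1, hβ.2, hZU, fun γ hγ hZγ => hZnot (Set.mem_iUnion₂.mpr ⟨γ, hγ, hZγ⟩)⟩
  · rintro ⟨β, h1, h2, h3, h4⟩
    refine Set.mem_iUnion₂.mpr ⟨β, ⟨h1, h2⟩, h3, fun hmem => ?_⟩
    obtain ⟨γ, hγ, hZγ⟩ := Set.mem_iUnion₂.mp hmem
    exact h4 γ hγ hZγ

/-! ### The forward direction -/

lemma forward_dir (H : Set (Set ℕ)) (α : Ordinal) (h2 : α.card ≤ Cardinal.aleph0)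
    (hard : ∀ A : Set (Set ℕ), MemD ScottPN α A → WadgeLe A H) :
    ∃ X : Ordinal → Set ℕ, AltChain H α X := by
  obtain ⟨X, hX⟩ := exists_chain α h2
  set U : Ordinal → Set (Set ℕ) := fun β => {Z | ¬ Z ⊆ X (β + 1)} with hU
  -- each U β is Scott open
  have hUopen : ∀ β, IsOpen[ScottPN] (U β) := by
    intro β
    have heq : U β = ⋃₀ ((fun n => {Z : Set ℕ | n ∈ Z}) '' (X (β + 1))ᶜ) := by
      ext Z
      simp only [hU, Set.mem_setOf_eq, Set.not_subset, Set.sUnion_image, Set.mem_iUnion,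
        Set.mem_compl_iff, Set.mem_setOf_eq]
      tauto
    rw [heq]
    apply TopologicalSpace.GenerateOpen.sUnion
    rintro s ⟨n, -, rfl⟩
    exact scott_singleton_open n
  -- membership of chain elements in U β
  have hmemU1 : ∀ δ ≤ α, ∀ β, X δ ∈ U β → δ ≤ β := by
    intro δ hδα β hmem
    by_contra hlt
    push_neg at hlt
    have hβ1δ : β + 1 ≤ δ := Order.add_one_le_iff.mpr hlt
    have hsub : X δ ⊆ X (β + 1) := by
      rcases eq_or_lt_of_le hβ1δ with h | h
      · rw [h]
      · exact (hX (β + 1) δ h hδα).1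
    exact hmem hsub
  have hmemU2 : ∀ δ β, δ ≤ β → β < α → X δ ∈ U β := by
    intro δ β hδβ hβα
    have hβ1α : β + 1 ≤ α := Order.add_one_le_iff.mpr hβα
    have hss : X (β + 1) ⊂ X δ := hX δ (β + 1) (lt_of_le_of_lt hδβ (lt_add_one β)) hβ1α
    exact fun hsub => hss.not_subset hsub
  -- the set A and its membership characterization on the chain
  have hmemA : ∀ δ ≤ α, (X δ ∈ DOp α U ↔ δ < α ∧ ¬ SameParity δ α) := by
    intro δ hδα
    rw [mem_DOp_iff]
    constructor
    · rintro ⟨β, hβα, hpar, hmem, hnot⟩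
      have hδβ : δ ≤ β := hmemU1 δ hδα β hmem
      rcases eq_or_lt_of_le hδβ with h | h
      · exact ⟨h ▸ hβα, h ▸ hpar⟩
      · exact absurd (hmemU2 δ δ le_rfl (lt_trans h hβα)) (hnot δ h)
    · rintro ⟨hδα', hpar⟩
      refine ⟨δ, hδα', hpar, hmemU2 δ δ le_rfl hδα', fun γ hγ hmem => ?_⟩
      exact absurd (hmemU1 δ hδα γ hmem) (not_le.mpr hγ)
  -- apply hardness
  obtain ⟨f, hf, hAf⟩ := hard (DOp α U) ⟨U, fun β _ => hUopen β, rfl⟩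
  have hfmem : ∀ δ ≤ α, (f (X δ) ∈ H ↔ δ < α ∧ ¬ SameParity δ α) := by
    intro δ hδα
    rw [← hmemA δ hδα, hAf]
    rfl
  -- membership simplification: for δ ≤ α, f (X δ) ∈ H ↔ ¬ SameParity δ α
  have hfmem' : ∀ δ ≤ α, (f (X δ) ∈ H ↔ ¬ SameParity δ α) := by
    intro δ hδα
    rcases eq_or_lt_of_le hδα with h | h
    · subst h
      rw [hfmem δ le_rfl]
      simp only [lt_irrefl, false_and, false_iff, not_not]
      exact sameParity_refl δ
    · rw [hfmem δ hδα]
      simp [h]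
  -- successor steps give distinct values
  have hsuccne : ∀ β < α, f (X (β + 1)) ≠ f (X β) := by
    intro β hβα hne
    have hβ1α : β + 1 ≤ α := Order.add_one_le_iff.mpr hβα
    have h1 : f (X (β + 1)) ∈ H ↔ ¬ SameParity (β + 1) α := hfmem' (β + 1) hβ1α
    have h2 : f (X β) ∈ H ↔ ¬ SameParity β α := hfmem' β hβα.le
    rw [hne] at h1
    rw [h2] at h1
    rw [sameParity_succ_left] at h1
    tauto
  refine ⟨fun β => f (X β), ⟨?_, fun β hβα => hfmem' β hβα⟩⟩
  intro β δ hβδ hδα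
  have hβα : β < α := lt_of_lt_of_le hβδ hδα
  have hβ1δ : β + 1 ≤ δ := Order.add_one_le_iff.mpr hβδ
  have hm1 : X δ ⊆ X (β + 1) := by
    rcases eq_or_lt_of_le hβ1δ with h | h
    · rw [h]
    · exact (hX (β + 1) δ h hδα).1
  have hm2 : X (β + 1) ⊆ X β := (hX β (β + 1) (lt_add_one β) (hβ1δ.trans hδα)).1
  have hsub1 : f (X δ) ⊆ f (X (β + 1)) := cont_mono hf hm1
  have hsub2 : f (X (β + 1)) ⊆ f (X β) := cont_mono hf hm2
  rw [Set.ssubset_iff_subset_ne]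
  refine ⟨hsub1.trans hsub2, fun heq => ?_⟩
  have heq' : f (X δ) = f (X β) := heq
  apply hsuccne β hβα
  apply Set.Subset.antisymm
  · exact hsub2
  · rw [← heq']; exact hsub1

/-! ### The backward direction -/

lemma backward_dir (H : Set (Set ℕ)) (α : Ordinal)
    (X : Ordinal → Set ℕ) (hX : AltChain H α X) :
    ∀ A : Set (Set ℕ), MemD ScottPN α A → WadgeLe A H := by
  classical
  rintro A ⟨U, hUopen, rfl⟩
  obtain ⟨hXdec, hXmem⟩ := hX
  set S : Set ℕ → Set Ordinal := fun Z => {β | β < α ∧ Z ∈ U β} with hS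
  set r : Set ℕ → Ordinal := fun Z => sInf ({α} ∪ S Z) with hr
  have hrle : ∀ Z, r Z ≤ α := fun Z => csInf_le' (Or.inl rfl)
  have hrmem : ∀ Z, r Z = α ∨ r Z ∈ S Z := by
    intro Z
    have : r Z ∈ {α} ∪ S Z := csInf_mem ⟨α, Or.inl rfl⟩
    simpa using this
  have hrle' : ∀ Z β, β ∈ S Z → r Z ≤ β := fun Z β h => csInf_le' (Or.inr h)
  -- the chain is decreasing wrt ≤
  have hXmono : ∀ β δ : Ordinal, β ≤ δ → δ ≤ α → X δ ⊆ X β := by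
    intro β δ hβδ hδα
    rcases eq_or_lt_of_le hβδ with h | h
    · rw [h]
    · exact (hXdec β δ h hδα).1
  refine ⟨fun Z => X (r Z), ?_, ?_⟩
  · -- continuity
    refine continuous_generateFrom_iff.mpr ?_
    rintro s ⟨A₀, -, rfl⟩
    by_cases hPα : A₀ ⊆ X α
    · have heq : (fun Z => X (r Z)) ⁻¹' {W : Set ℕ | A₀ ⊆ W} = Set.univ := by
        ext Z
        simp only [Set.mem_preimage, Set.mem_setOf_eq, Set.mem_univ, iff_true]
        exact hPα.trans (hXmono (r Z) α (hrle Z) le_rfl)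
      rw [heq]
      exact TopologicalSpace.GenerateOpen.univ
    · set β₀ : Ordinal := sInf {β | ¬ A₀ ⊆ X β} with hβ₀
      have hβ₀mem : β₀ ∈ {β : Ordinal | ¬ A₀ ⊆ X β} := csInf_mem ⟨α, hPα⟩
      have hβ₀le : β₀ ≤ α := csInf_le' hPα
      have hlt : ∀ γ < β₀, A₀ ⊆ X γ := by
        intro γ hγ
        by_contra h
        have hmem : γ ∈ {β : Ordinal | ¬ A₀ ⊆ X β} := h
        exact absurd (csInf_le' hmem) (not_le.mpr hγ)
      have heq : (fun Z => X (r Z)) ⁻¹' {W : Set ℕ | A₀ ⊆ W} = ⋃ β ∈ Set.Iio β₀, U β := by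
        ext Z
        simp only [Set.mem_preimage, Set.mem_setOf_eq, Set.mem_iUnion, Set.mem_Iio,
          exists_prop]
        constructor
        · intro hsub
          have hrlt : r Z < β₀ := by
            by_contra hge
            push_neg at hge
            exact hβ₀mem (hsub.trans (hXmono β₀ (r Z) hge (hrle Z)))
          have hrS : r Z ∈ S Z := by
            rcases hrmem Z with h | h
            · exact absurd (h ▸ hrlt) (not_lt.mpr hβ₀le)
            · exact h
          exact ⟨r Z, hrlt, hrS.2⟩
        · rintro ⟨β, hβlt, hZβ⟩
          have hβS : β ∈ S Z := ⟨lt_of_lt_of_le hβlt hβ₀le, hZβ⟩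
          exact hlt (r Z) (lt_of_le_of_lt (hrle' Z β hβS) hβlt)
      rw [heq]
      exact @isOpen_biUnion (Set ℕ) Ordinal ScottPN (Set.Iio β₀) U
        (fun β hβ => hUopen β (lt_of_lt_of_le hβ hβ₀le))
  · -- reduction property
    ext Z
    simp only [Set.mem_preimage]
    rw [hXmem (r Z) (hrle Z), mem_DOp_iff]
    constructor
    · rintro ⟨β, hβα, hpar, hZβ, hnot⟩
      have hβS : β ∈ S Z := ⟨hβα, hZβ⟩
      have hrβ : r Z ≤ β := hrle' Z β hβS
      rcases eq_or_lt_of_le hrβ with h | h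
      · rw [h]; exact hpar
      · exfalso
        rcases hrmem Z with h' | h'
        · exact absurd (h' ▸ h) (not_lt.mpr hβα.le)
        · exact hnot (r Z) h h'.2
    · intro hpar
      have hrS : r Z ∈ S Z := by
        rcases hrmem Z with h | h
        · exact absurd (h ▸ hpar) (fun hc => hc (sameParity_refl α))
        · exact h
      refine ⟨r Z, hrS.1, hpar, hrS.2, fun γ hγ hZγ => ?_⟩
      have : γ ∈ S Z := ⟨lt_trans hγ hrS.1, hZγ⟩
      exact absurd (hrle' Z γ this) (not_le.mpr hγ)

/-- `H ⊆ 𝒫(ℕ)` is Wadge hard for `D_α(𝒫(ℕ))` iff there is a decreasing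
`H`-alternating chain in `𝒫(ℕ)` of length `α+1`. -/
theorem wadge_hard_iff_alternating_chain (H : Set (Set ℕ))
    (α : Ordinal) (h1 : 1 ≤ α) (h2 : α.card ≤ Cardinal.aleph0) :
    (∀ A : Set (Set ℕ), MemD ScottPN α A → WadgeLe A H) ↔
      ∃ X : Ordinal → Set ℕ, AltChain H α X := by
  constructor
  · exact forward_dir H α h2
  · rintro ⟨X, hX⟩
    exact backward_dir H α X hX
end

section
/- The family 𝒫_{<ω}(ℕ) of all finite subsets of ℕ belongs to Σ⁰₂(𝒫(ℕ)) but not to Π⁰₂(𝒫(ℕ)); equivalently, the family of infinite subsets of ℕ is not in Σ⁰₂(𝒫(ℕ)). -/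
open Topology

/-- Membership in `Σ⁰₂(E)`: countable unions of differences of open sets. -/
def MemSigma2 {E : Type*} (t : TopologicalSpace E) (A : Set E) : Prop :=
  ∃ U V : ℕ → Set E, (∀ n, IsOpen[t] (U n)) ∧ (∀ n, IsOpen[t] (V n)) ∧
    A = ⋃ n, U n \ V n

lemma isOpenB (A : Set ℕ) (hA : A.Finite) : IsOpen[ScottPN] {X : Set ℕ | A ⊆ X} :=
  TopologicalSpace.GenerateOpen.basic _ ⟨A, hA, rfl⟩

lemma scott_open_prop {O : Set (Set ℕ)} (h : IsOpen[ScottPN] O) :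
    (∀ X Y : Set ℕ, X ⊆ Y → X ∈ O → Y ∈ O) ∧
    (∀ X ∈ O, ∃ F : Set ℕ, F.Finite ∧ F ⊆ X ∧ F ∈ O) := by
  induction h with
  | basic s hs =>
    obtain ⟨A, hA, rfl⟩ := hs
    exact ⟨fun X Y hXY hX => hX.trans hXY,
      fun X hX => ⟨A, hA, hX, show A ⊆ A from subset_rfl⟩⟩
  | univ =>
    exact ⟨fun _ _ _ _ => trivial, fun X _ => ⟨∅, Set.finite_empty, Set.empty_subset X, trivial⟩⟩
  | inter s t hs ht ihs iht =>
    refine ⟨fun X Y hXY hX => ⟨ihs.1 X Y hXY hX.1, iht.1 X Y hXY hX.2⟩, ?_⟩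
    rintro X ⟨hXs, hXt⟩
    obtain ⟨F, hF, hFX, hFs⟩ := ihs.2 X hXs
    obtain ⟨G, hG, hGX, hGt⟩ := iht.2 X hXt
    exact ⟨F ∪ G, hF.union hG, Set.union_subset hFX hGX,
      ihs.1 F (F ∪ G) Set.subset_union_left hFs,
      iht.1 G (F ∪ G) Set.subset_union_right hGt⟩
  | sUnion S hS ih =>
    refine ⟨fun X Y hXY => ?_, fun X => ?_⟩
    · rintro ⟨s, hs, hXs⟩
      exact ⟨s, hs, (ih s hs).1 X Y hXY hXs⟩
    · rintro ⟨s, hs, hXs⟩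
      obtain ⟨F, hF, hFX, hFs⟩ := (ih s hs).2 X hXs
      exact ⟨F, hF, hFX, s, hs, hFs⟩

/-- The family of finite subsets of `ℕ` is in `Σ⁰₂(𝒫(ℕ))`, but its complement
(the family of infinite subsets of `ℕ`) is not in `Σ⁰₂(𝒫(ℕ))`; that is,
`𝒫_{<ω}(ℕ)` is not in `Π⁰₂(𝒫(ℕ))`. -/
theorem finite_sets_sigma2_not_pi2 :
    MemSigma2 ScottPN {X : Set ℕ | X.Finite} ∧
    ¬ MemSigma2 ScottPN ({X : Set ℕ | X.Finite}ᶜ) := by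
  constructor
  · -- finite sets are Σ⁰₂
    set e : ℕ → Finset ℕ := Denumerable.ofNat (Finset ℕ) with he
    refine ⟨fun n => {X : Set ℕ | ↑(e n) ⊆ X},
      fun n => {X : Set ℕ | ¬ X ⊆ ↑(e n)},
      fun n => isOpenB _ (e n).finite_toSet, fun n => ?_, ?_⟩
    · have : {X : Set ℕ | ¬ X ⊆ ↑(e n)} =
          ⋃ a ∈ (↑(e n) : Set ℕ)ᶜ, {X : Set ℕ | {a} ⊆ X} := by
        ext X
        simp only [Set.mem_setOf_eq, Set.mem_iUnion, Set.mem_compl_iff,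
          Set.singleton_subset_iff, Set.not_subset]
        tauto
      show IsOpen[ScottPN] {X : Set ℕ | ¬ X ⊆ ↑(e n)}
      rw [this]
      letI := ScottPN
      exact isOpen_biUnion fun a _ => isOpenB {a} (Set.finite_singleton a)
    · ext X
      simp only [Set.mem_setOf_eq, Set.mem_iUnion, Set.mem_diff, Set.mem_setOf_eq, not_not]
      constructor
      · intro hX
        refine ⟨@Encodable.encode _ Denumerable.toEncodable hX.toFinset, ?_, ?_⟩ <;>
          rw [he, Denumerable.ofNat_encode, hX.coe_toFinset]
      · rintro ⟨n, h1, h2⟩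
        have : X = ↑(e n) := Set.Subset.antisymm h2 h1
        rw [this]; exact (e n).finite_toSet
  · rintro ⟨U, V, hU, hV, hEq⟩
    have huniv : (Set.univ : Set ℕ) ∈ ({X : Set ℕ | X.Finite}ᶜ) := by
      exact Set.infinite_univ
    rw [hEq] at huniv
    obtain ⟨_, ⟨n, rfl⟩, hUn, hVn⟩ := huniv
    obtain ⟨F, hF, -, hFU⟩ := (scott_open_prop (hU n)).2 _ hUn
    have hFnot : F ∉ ⋃ n, U n \ V n := by
      rw [← hEq]; simp [hF]
    have hFV : F ∈ V n := by
      by_contra h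
      exact hFnot (Set.mem_iUnion.2 ⟨n, hFU, h⟩)
    exact hVn ((scott_open_prop (hV n)).1 F Set.univ (Set.subset_univ F) hFV)
end
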